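/- Let T be a triangulated category with coproducts, let C be a compact object of T, and let X_1 → X_2 → X_3 → ··· be a sequence with homotopy colimit hocolim X_n defined by the triangle ⊕X_n --(1−shift)--> ⊕X_n → hocolim X_n. Then every morphism C → hocolim X_n factors through the canonical map X_i → hocolim X_n for some i. -/

import Mathlib

open CategoryTheory Limits Pretriangulated

/-- If a `ℕ`-indexed dfinsupp is fixed by the "shift" map built from maps
`ψ n : A n →+ A (n+1)`, it must be zero. -/
private lemma telescope_fixed_zero {A : ℕ → Type*} [∀ n, AddCommMonoid (A n)]
    (ψ : ∀ n, A n →+ A (n + 1)) (p : Π₀ n, A n)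
    (hp : p = DFinsupp.sumAddHom
      (fun n => (DFinsupp.singleAddHom A (n + 1)).comp (ψ n)) p) :
    p = 0 := by
  classical
  set Φ : (Π₀ n, A n) →+ (Π₀ n, A n) :=
    DFinsupp.sumAddHom (fun n => (DFinsupp.singleAddHom A (n + 1)).comp (ψ n)) with hΦ
  have h0 : ∀ q : Π₀ n, A n, (Φ q) 0 = 0 := by
    intro q
    induction q using DFinsupp.induction with
    | h0 => simp
    | ha i b r h1 h2 ih =>
      rw [map_add, DFinsupp.add_apply, ih, add_zero, DFinsupp.sumAddHom_single]
      simp [DFinsupp.single_apply]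
  have hs : ∀ (q : Π₀ n, A n) (n : ℕ), (Φ q) (n + 1) = ψ n (q n) := by
    intro q n
    induction q using DFinsupp.induction with
    | h0 => simp
    | ha i b r h1 h2 ih =>
      rw [map_add, DFinsupp.add_apply, ih, DFinsupp.sumAddHom_single,
        DFinsupp.add_apply]
      simp only [AddMonoidHom.coe_comp, Function.comp_apply,
        DFinsupp.singleAddHom_apply]
      rw [map_add]
      by_cases h : i = n
      · subst h
        simp [DFinsupp.single_apply]
      · rw [DFinsupp.single_eq_of_ne (by omega), DFinsupp.single_eq_of_ne (Ne.symm h),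
          map_zero, zero_add]
  ext n
  simp only [DFinsupp.coe_zero, Pi.zero_apply]
  induction n with
  | zero => rw [hp]; exact h0 p
  | succ n ih => rw [hp, hs p n, ih, map_zero]

/-- For a compact object `C`, postcomposition with `𝟙 - shift` on `Hom(C, ∐ Y)` is
injective; i.e. any `α` killed by it is zero. -/
private lemma compact_one_sub_shift_inj {T : Type*} [Category T] [Preadditive T]
    (C : T) (Y : ℕ → T) [HasCoproduct Y]
    (hCY : Function.Bijective (fun p : Π₀ j : ℕ, (C ⟶ Y j) =>
      DFinsupp.sumAddHom
        (fun j => AddMonoidHom.mk' (fun g : C ⟶ Y j => g ≫ Sigma.ι Y j)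
          (fun a b => by simp [Preadditive.add_comp])) p))
    (φ' : ∀ n, Y n ⟶ Y (n + 1)) (α : C ⟶ ∐ Y)
    (hα : α ≫ (𝟙 (∐ Y) - Sigma.desc fun n => φ' n ≫ Sigma.ι Y (n + 1)) = 0) :
    α = 0 := by
  classical
  obtain ⟨p, hp⟩ := hCY.2 α
  set Θ : (Π₀ n : ℕ, (C ⟶ Y n)) →+ (C ⟶ ∐ Y) :=
    DFinsupp.sumAddHom
      (fun j => AddMonoidHom.mk' (fun g : C ⟶ Y j => g ≫ Sigma.ι Y j)
        (fun a b => by simp [Preadditive.add_comp])) with hΘ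
  have hp' : Θ p = α := hp
  set ψ : ∀ n : ℕ, (C ⟶ Y n) →+ (C ⟶ Y (n + 1)) :=
    fun n => AddMonoidHom.mk' (fun g : C ⟶ Y n => g ≫ φ' n)
      (fun a b => by simp [Preadditive.add_comp]) with hψ
  set Φ : (Π₀ n : ℕ, (C ⟶ Y n)) →+ (Π₀ n : ℕ, (C ⟶ Y n)) :=
    DFinsupp.sumAddHom
      (fun n => (DFinsupp.singleAddHom (fun k => (C ⟶ Y k)) (n + 1)).comp (ψ n))
      with hΦ
  have hΘΦ : ∀ q, Θ (Φ q) =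
      Θ q ≫ Sigma.desc fun n => φ' n ≫ Sigma.ι Y (n + 1) := by
    intro q
    induction q using DFinsupp.induction with
    | h0 => simp
    | ha i b r h1 h2 ih =>
      rw [map_add, map_add, map_add, Preadditive.add_comp, ih]
      congr 1
      have e1 : Φ (DFinsupp.single i b) =
          DFinsupp.single (β := fun k => (C ⟶ Y k)) (i + 1) (b ≫ φ' i) :=
        DFinsupp.sumAddHom_single
          (fun n => (DFinsupp.singleAddHom (fun k => (C ⟶ Y k)) (n + 1)).comp (ψ n)) i b
      rw [e1]
      have e2 : Θ (DFinsupp.single (β := fun k => (C ⟶ Y k)) (i + 1) (b ≫ φ' i)) =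
          (b ≫ φ' i) ≫ Sigma.ι Y (i + 1) := DFinsupp.sumAddHom_single
          (fun j => AddMonoidHom.mk' (fun g : C ⟶ Y j => g ≫ Sigma.ι Y j)
            (fun a b => by simp [Preadditive.add_comp])) (i + 1) (b ≫ φ' i)
      have e3 : Θ (DFinsupp.single i b) = b ≫ Sigma.ι Y i :=
        DFinsupp.sumAddHom_single
          (fun j => AddMonoidHom.mk' (fun g : C ⟶ Y j => g ≫ Sigma.ι Y j)
            (fun a b => by simp [Preadditive.add_comp])) i b
      rw [e2, e3]
      simp
  have hfix : p = Φ p := by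
    apply hCY.1
    show Θ p = Θ (Φ p)
    rw [hΘΦ, hp']
    have h2 : α - α ≫ Sigma.desc (fun n => φ' n ≫ Sigma.ι Y (n + 1)) = 0 := by
      simpa [Preadditive.comp_sub] using hα
    rw [← sub_eq_zero]
    exact h2
  have hp0 : p = 0 := telescope_fixed_zero ψ p hfix
  rw [← hp', hp0, map_zero]

/-- In a triangulated category with coproducts, every morphism from a compact
object `C` to the homotopy colimit of a telescope `X₁ → X₂ → ⋯` (defined by the
triangle `⊕Xₙ --(1−shift)--> ⊕Xₙ → hocolim`) factors through some `Xᵢ`. -/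
theorem stmt5 {T : Type*} [Category T] [Preadditive T] [HasZeroObject T]
    [HasShift T ℤ] [∀ n : ℤ, (shiftFunctor T n).Additive] [Pretriangulated T]
    [HasCoproducts.{0} T]
    (C : T)
    -- `C` is compact: `Hom(C, −)` commutes with arbitrary coproducts
    (hC : ∀ (J : Type) (_ : DecidableEq J) (Y : J → T),
      Function.Bijective (fun p : Π₀ j : J, (C ⟶ Y j) =>
        DFinsupp.sumAddHom
          (fun j => AddMonoidHom.mk' (fun g : C ⟶ Y j => g ≫ Sigma.ι Y j)
            (fun a b => by simp [Preadditive.add_comp])) p))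
    (X : ℕ → T) (φ : ∀ n, X n ⟶ X (n + 1)) (H : T)
    (π : (∐ X) ⟶ H) (δ : H ⟶ (∐ X)⟦(1 : ℤ)⟧)
    (htri : Triangle.mk
      (𝟙 (∐ X) - Sigma.desc fun n => φ n ≫ Sigma.ι X (n + 1)) π δ ∈ distTriang T)
    (f : C ⟶ H) :
    ∃ (i : ℕ) (g : C ⟶ X i), f = g ≫ Sigma.ι X i ≫ π := by
  classical
  -- Step 1: `f ≫ δ = 0`, using compactness and injectivity of `1 - shift`.
  have hδ0 : δ ≫ (shiftFunctor T (1 : ℤ)).map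
      (𝟙 (∐ X) - Sigma.desc fun n => φ n ≫ Sigma.ι X (n + 1)) = 0 :=
    comp_distTriang_mor_zero₃₁ _ htri
  have hcomm : sigmaComparison (shiftFunctor T (1 : ℤ)) X ≫
      (shiftFunctor T (1 : ℤ)).map (Sigma.desc fun n => φ n ≫ Sigma.ι X (n + 1)) =
      (Sigma.desc fun n => (shiftFunctor T (1 : ℤ)).map (φ n) ≫
        Sigma.ι (fun k => (shiftFunctor T (1 : ℤ)).obj (X k)) (n + 1)) ≫
      sigmaComparison (shiftFunctor T (1 : ℤ)) X := by
    apply Sigma.hom_ext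
    intro n
    rw [ι_comp_sigmaComparison_assoc, ← Functor.map_comp, colimit.ι_desc]
    simp [← Functor.map_comp]
  have hfδ : f ≫ δ = 0 := by
    have hα := compact_one_sub_shift_inj C
      (fun k => (shiftFunctor T (1 : ℤ)).obj (X k)) (hC ℕ inferInstance _)
      (fun n => (shiftFunctor T (1 : ℤ)).map (φ n))
      ((f ≫ δ) ≫ inv (sigmaComparison (shiftFunctor T (1 : ℤ)) X)) ?_
    · have : f ≫ δ = (((f ≫ δ) ≫ inv (sigmaComparison (shiftFunctor T (1 : ℤ)) X)) ≫
          sigmaComparison (shiftFunctor T (1 : ℤ)) X) := by simp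
      rw [this, hα, zero_comp]
    · rw [← cancel_mono (sigmaComparison (shiftFunctor T (1 : ℤ)) X), zero_comp,
        Category.assoc]
      have h1 : (𝟙 _ - Limits.Sigma.desc fun n => (shiftFunctor T (1 : ℤ)).map (φ n) ≫
            Sigma.ι (fun k => (shiftFunctor T (1 : ℤ)).obj (X k)) (n + 1)) ≫
            sigmaComparison (shiftFunctor T (1 : ℤ)) X =
          sigmaComparison (shiftFunctor T (1 : ℤ)) X ≫
            (shiftFunctor T (1 : ℤ)).map
              (𝟙 (∐ X) - Sigma.desc fun n => φ n ≫ Sigma.ι X (n + 1)) := by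
        rw [CategoryTheory.Functor.map_sub, CategoryTheory.Functor.map_id, Preadditive.sub_comp,
          Preadditive.comp_sub, Category.id_comp, Category.comp_id, hcomm]
      rw [h1]
      simp only [Category.assoc, IsIso.inv_hom_id_assoc]
      rw [hδ0, comp_zero]
  -- Step 2: factor `f` through `π`.
  obtain ⟨u, hu⟩ := Triangle.coyoneda_exact₂ _ (rot_of_distTriang _ htri) f
    (by exact hfδ)
  have hu' : f = u ≫ π := by exact hu
  -- Step 3: write `u` via compactness for `X`.
  obtain ⟨q, hq⟩ := (hC ℕ inferInstance X).2 u
  have hq' : (DFinsupp.sumAddHom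
      (fun j => AddMonoidHom.mk' (fun g : C ⟶ X j => g ≫ Sigma.ι X j)
        (fun a b => by simp [Preadditive.add_comp])) q) = u := hq
  -- Step 4: the maps `ι j ≫ π` factor through later stages.
  have hπS : π = (Sigma.desc fun n => φ n ≫ Sigma.ι X (n + 1)) ≫ π := by
    have h := comp_distTriang_mor_zero₁₂ _ htri
    change (𝟙 (∐ X) - Sigma.desc fun n => φ n ≫ Sigma.ι X (n + 1)) ≫ π = 0 at h
    rw [Preadditive.sub_comp, Category.id_comp, sub_eq_zero] at h
    exact h
  have hstep : ∀ j : ℕ, Sigma.ι X j ≫ π = φ j ≫ Sigma.ι X (j + 1) ≫ π := by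
    intro j
    conv_lhs => rw [hπS]
    rw [← Category.assoc, colimit.ι_desc, ← Category.assoc]
    rfl
  have hfac : ∀ (i j : ℕ), j ≤ i → ∃ g' : X j ⟶ X i,
      Sigma.ι X j ≫ π = g' ≫ Sigma.ι X i ≫ π := by
    intro i j hji
    induction i, hji using Nat.le_induction with
    | base => exact ⟨𝟙 _, by simp⟩
    | succ i hji ih =>
      obtain ⟨g', hg'⟩ := ih
      exact ⟨g' ≫ φ i, by rw [hg', hstep i, Category.assoc]⟩
  choose g' hg' using fun j (h : j ≤ q.support.sup id) => hfac (q.support.sup id) j h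
  refine ⟨q.support.sup id, ∑ j ∈ q.support,
    q j ≫ (if h : j ≤ q.support.sup id then g' j h else 0), ?_⟩
  have hsum : u = ∑ j ∈ q.support, q j ≫ Sigma.ι X j := by
    rw [← hq', DFinsupp.sumAddHom_apply]
    rfl
  rw [hu']
  change @CategoryStruct.comp _ _ C (∐ X) H u π = _
  rw [hsum, Preadditive.sum_comp, Preadditive.sum_comp]
  apply Finset.sum_congr rfl
  intro j hj
  have hji : j ≤ q.support.sup id := Finset.le_sup (f := id) hj
  rw [dif_pos hji]
  simp only [Category.assoc]
  rw [hg' j hji]
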